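/- In the regularised RBM construction, the patterns ξ^1,…,ξ^H are the only strict local minima of the energy function under single spin flips: any configuration (v,h) that is not a pattern admits a single spin flip that does not increase (and in all but the degenerate plateau case strictly decreases) the energy, and from any configuration of the form (v, -e) there is a finite sequence of single spin flips with non-increasing energy terminating at a pattern. -/
import Mathlib


open Finset

/-- Energy of the regularised RBM with weights `W j α = 2 A v α j`, zero visible
biases and hidden biases `c α = 2 A (λ α - V)`. -/
noncomputable def raEnergy {V H : ℕ} (A : ℝ) (lam : Fin H → ℝ)
    (v : Fin H → Fin V → ℝ) (x : Fin V → ℝ) (h : Fin H → ℝ) : ℝ :=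
  -(∑ j, ∑ α, x j * (2 * A * v α j) * h α)
    - ∑ α, (2 * A * (lam α - (V : ℝ))) * h α

/-- Overlap `S α η = v^α · v^η`. -/
noncomputable def raOverlap {V H : ℕ} (v : Fin H → Fin V → ℝ) (α η : Fin H) : ℝ :=
  ∑ j, v α j * v η j

/-- `c'` is obtained from `c` by a single spin flip (visible or hidden). -/
def SingleFlip {V H : ℕ} (c c' : (Fin V → ℝ) × (Fin H → ℝ)) : Prop :=
  (∃ j, c'.1 = Function.update c.1 j (-(c.1 j)) ∧ c'.2 = c.2) ∨
  (∃ α, c'.1 = c.1 ∧ c'.2 = Function.update c.2 α (-(c.2 α)))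

private lemma sum_update_mul {n : ℕ} (f g : Fin n → ℝ) (j : Fin n) (c : ℝ) :
    ∑ i, Function.update f j c i * g i = (∑ i, f i * g i) + (c - f j) * g j := by
  classical
  have key : ∀ i, Function.update f j c i * g i
      = f i * g i + (if i = j then (c - f j) * g j else 0) := by
    intro i
    rcases eq_or_ne i j with rfl | hij
    · simp only [Function.update_self, if_pos rfl, eq_self_iff_true, if_true]; ring
    · simp [Function.update_of_ne hij, hij]
  rw [Finset.sum_congr rfl fun i _ => key i, Finset.sum_add_distrib,
    Finset.sum_ite_eq' Finset.univ j fun _ => (c - f j) * g j]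
  simp

private lemma raEnergy_eq1 {V H : ℕ} (A : ℝ) (lam : Fin H → ℝ)
    (v : Fin H → Fin V → ℝ) (x : Fin V → ℝ) (h : Fin H → ℝ) :
    raEnergy A lam v x h
      = -(∑ j, x j * ∑ α, 2 * A * v α j * h α)
        - ∑ α, (2 * A * (lam α - (V : ℝ))) * h α := by
  unfold raEnergy
  have key : ∀ j ∈ Finset.univ, (∑ α, x j * (2 * A * v α j) * h α)
      = x j * ∑ α, 2 * A * v α j * h α := by
    intro j _
    rw [Finset.mul_sum]
    exact Finset.sum_congr rfl fun α _ => by ring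
  rw [Finset.sum_congr rfl key]

private lemma raEnergy_eq2 {V H : ℕ} (A : ℝ) (lam : Fin H → ℝ)
    (v : Fin H → Fin V → ℝ) (x : Fin V → ℝ) (h : Fin H → ℝ) :
    raEnergy A lam v x h
      = -(∑ α, h α * (2 * A * ((∑ j, x j * v α j) + lam α - (V : ℝ)))) := by
  have key : (∑ α, ∑ j, x j * (2 * A * v α j) * h α)
        + ∑ α, (2 * A * (lam α - (V : ℝ))) * h α
      = ∑ α, h α * (2 * A * ((∑ j, x j * v α j) + lam α - (V : ℝ))) := by
    rw [← Finset.sum_add_distrib]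
    refine Finset.sum_congr rfl fun α _ => ?_
    have h1 : (∑ j, x j * (2 * A * v α j) * h α) = 2 * A * h α * ∑ j, x j * v α j := by
      rw [Finset.mul_sum]
      exact Finset.sum_congr rfl fun j _ => by ring
    rw [h1]; ring
  unfold raEnergy
  rw [Finset.sum_comm]
  linarith [key]

private lemma raEnergy_update_vis {V H : ℕ} (A : ℝ) (lam : Fin H → ℝ)
    (v : Fin H → Fin V → ℝ) (x : Fin V → ℝ) (h : Fin H → ℝ) (j : Fin V) (c : ℝ) :
    raEnergy A lam v (Function.update x j c) h
      = raEnergy A lam v x h - (c - x j) * (∑ α, 2 * A * v α j * h α) := by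
  rw [raEnergy_eq1, raEnergy_eq1, sum_update_mul]; ring

private lemma raEnergy_update_hid {V H : ℕ} (A : ℝ) (lam : Fin H → ℝ)
    (v : Fin H → Fin V → ℝ) (x : Fin V → ℝ) (h : Fin H → ℝ) (γ : Fin H) (c : ℝ) :
    raEnergy A lam v x (Function.update h γ c)
      = raEnergy A lam v x h
        - (c - h γ) * (2 * A * ((∑ j, x j * v γ j) + lam γ - (V : ℝ))) := by
  rw [raEnergy_eq2, raEnergy_eq2, sum_update_mul]; ring

private lemma col_sum_zero {V H : ℕ} (v : Fin H → Fin V → ℝ)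
    (hdist : Function.Injective v)
    (hneg : ∀ η, ∃ η', ∀ j, v η' j = -(v η j)) (j : Fin V) :
    ∑ α, v α j = 0 := by
  classical
  choose σ hσ using hneg
  have hinj : Function.Injective σ := by
    intro a b hab
    apply hdist
    funext j'
    have ha := hσ a j'
    have hb := hσ b j'
    rw [hab] at ha
    rw [ha] at hb
    linarith
  have hbij : Function.Bijective σ := Finite.injective_iff_bijective.mp hinj
  have h1 : ∑ α, v (σ α) j = ∑ α, v α j :=
    Fintype.sum_bijective σ hbij _ _ fun α => rfl
  have h2 : ∑ α, v (σ α) j = -∑ α, v α j := by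
    rw [← Finset.sum_neg_distrib]
    exact Finset.sum_congr rfl fun α _ => hσ α j
  linarith

private lemma overlap_bound {V : ℕ} (x w : Fin V → ℝ)
    (hx : ∀ j, x j = 1 ∨ x j = -1) (hw : ∀ j, w j = 1 ∨ w j = -1)
    (j0 : Fin V) (hne : x j0 ≠ w j0) :
    ∑ j, x j * w j ≤ (V : ℝ) - 2 := by
  classical
  have hterm : ∀ j, x j * w j ≤ 1 := by
    intro j
    rcases hx j with h | h <;> rcases hw j with h' | h' <;> rw [h, h'] <;> norm_num
  have hj0 : x j0 * w j0 = -1 := by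
    rcases hx j0 with h | h <;> rcases hw j0 with h' | h' <;>
      first
      | (exact absurd (h.trans h'.symm) hne)
      | (rw [h, h']; norm_num)
  have hV : 1 ≤ V := j0.pos
  have hcard : (((Finset.univ : Finset (Fin V)).erase j0).card : ℝ) = (V : ℝ) - 1 := by
    rw [Finset.card_erase_of_mem (Finset.mem_univ j0), Finset.card_univ, Fintype.card_fin,
      Nat.cast_sub hV, Nat.cast_one]
  have hsum : ∑ j ∈ (Finset.univ : Finset (Fin V)).erase j0, x j * w j ≤ (V : ℝ) - 1 := by
    calc ∑ j ∈ (Finset.univ : Finset (Fin V)).erase j0, x j * w j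
        ≤ ((Finset.univ : Finset (Fin V)).erase j0).card • (1 : ℝ) :=
          Finset.sum_le_card_nsmul _ _ 1 fun j _ => hterm j
      _ = (V : ℝ) - 1 := by rw [nsmul_eq_mul, mul_one, hcard]
  rw [← Finset.add_sum_erase _ _ (Finset.mem_univ j0)]
  linarith

private lemma self_overlap {V : ℕ} (w : Fin V → ℝ) (hw : ∀ j, w j = 1 ∨ w j = -1) :
    ∑ j, w j * w j = (V : ℝ) := by
  have key : ∀ j ∈ Finset.univ, w j * w j = (1 : ℝ) := by
    intro j _
    rcases hw j with h | h <;> rw [h] <;> norm_num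
  rw [Finset.sum_congr rfl key]
  simp

theorem regularised_patterns_only_local_minima
    (V H : ℕ) (hH : 1 ≤ H) (A : ℝ) (hA : 0 < A) (lam : Fin H → ℝ)
    (hlam : ∀ α, 3 / 4 < lam α ∧ lam α < 5 / 4)
    (v : Fin H → Fin V → ℝ)
    (hpm : ∀ η j, v η j = 1 ∨ v η j = -1)
    (hdist : Function.Injective v)
    (hneg : ∀ η, ∃ η', ∀ j, v η' j = -(v η j)) :
    -- a single spin flip with non-increasing energy
    let step : ((Fin V → ℝ) × (Fin H → ℝ)) → ((Fin V → ℝ) × (Fin H → ℝ)) → Prop :=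
      fun c c' => SingleFlip c c' ∧
        raEnergy A lam v c'.1 c'.2 ≤ raEnergy A lam v c.1 c.2
    -- (a) any non-pattern ±1 configuration admits a single spin flip that does
    -- not increase the energy
    (∀ x : Fin V → ℝ, ∀ h : Fin H → ℝ,
      (∀ j, x j = 1 ∨ x j = -1) → (∀ α, h α = 1 ∨ h α = -1) →
      (¬∃ η, x = v η ∧ h = (fun γ => if γ = η then (1 : ℝ) else -1)) →
      ∃ c', step (x, h) c') ∧
    -- (b) from any configuration of the form (x, -e) a finite sequence of
    -- single spin flips with non-increasing energy reaches a pattern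
    (∀ x : Fin V → ℝ, (∀ j, x j = 1 ∨ x j = -1) →
      ∃ η : Fin H, Relation.ReflTransGen step (x, fun _ => (-1 : ℝ))
        (v η, fun γ => if γ = η then (1 : ℝ) else -1)) := by
  classical
  intro step
  have hcol : ∀ j, ∑ α, v α j = 0 := col_sum_zero v hdist hneg
  -- visible flip at h = -e keeps the energy unchanged
  have hvisE : ∀ (x : Fin V → ℝ) (j : Fin V),
      raEnergy A lam v (Function.update x j (-(x j))) (fun _ => (-1 : ℝ))
        = raEnergy A lam v x (fun _ => (-1 : ℝ)) := by
    intro x j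
    rw [raEnergy_update_vis]
    have hz : (∑ α, 2 * A * v α j * ((fun _ : Fin H => (-1 : ℝ)) α)) = 0 := by
      have : ∀ α ∈ Finset.univ, 2 * A * v α j * ((fun _ : Fin H => (-1 : ℝ)) α)
          = -(2 * A) * v α j := fun α _ => by ring
      rw [Finset.sum_congr rfl this, ← Finset.mul_sum, hcol j, mul_zero]
    rw [hz]; ring
  constructor
  · -- part (a)
    intro x h hx hh hnp
    by_cases hE : ∃ η, h η = 1
    · obtain ⟨η, hη⟩ := hE
      by_cases h2 : ∃ β, β ≠ η ∧ h β = 1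
      · -- at least two hidden spins up
        obtain ⟨β, hβη, hβ⟩ := h2
        have hvne : v η ≠ v β := fun hvv => hβη (hdist hvv).symm
        obtain ⟨γ, hγ1, hxγ⟩ : ∃ γ, h γ = 1 ∧ x ≠ v γ := by
          by_cases hxη : x = v η
          · exact ⟨β, hβ, fun hxβ => hvne (hxη ▸ hxβ ▸ rfl)⟩
          · exact ⟨η, hη, hxη⟩
        obtain ⟨j0, hj0⟩ := Function.ne_iff.mp hxγ
        have hS : ∑ j, x j * v γ j ≤ (V : ℝ) - 2 :=
          overlap_bound x (v γ) hx (hpm γ) j0 hj0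
        refine ⟨(x, Function.update h γ (-(h γ))), Or.inr ⟨γ, rfl, rfl⟩, ?_⟩
        show raEnergy A lam v x (Function.update h γ (-(h γ))) ≤ raEnergy A lam v x h
        rw [raEnergy_update_hid, hγ1]
        have hl := (hlam γ).2
        have hneg' : (∑ j, x j * v γ j) + lam γ - (V : ℝ) ≤ 0 := by linarith
        nlinarith [mul_nonneg hA.le (neg_nonneg.mpr hneg')]
      · -- exactly one hidden spin up: h = h^η, so x ≠ v η
        push_neg at h2
        have hhfull : h = fun γ => if γ = η then (1 : ℝ) else -1 := by
          funext γ
          by_cases hc : γ = η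
          · rw [if_pos hc, hc]; exact hη
          · rw [if_neg hc]
            exact (hh γ).resolve_left (h2 γ hc)
        have hxne : x ≠ v η := fun hxe => hnp ⟨η, hxe, hhfull⟩
        obtain ⟨j0, hj0⟩ := Function.ne_iff.mp hxne
        have hxj0 : x j0 = -(v η j0) := by
          rcases hx j0 with h' | h' <;> rcases hpm η j0 with h'' | h'' <;>
            first
            | (exact absurd (h'.trans h''.symm) hj0)
            | (rw [h', h'']; try norm_num)
        have hT : (∑ α, 2 * A * v α j0 * h α) = 4 * A * v η j0 := by
          have key : ∀ α ∈ Finset.univ, 2 * A * v α j0 * h α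
              = (if α = η then 4 * A * v α j0 else 0) - 2 * A * v α j0 := by
            intro α _
            simp only [hhfull]
            by_cases hc : α = η
            · rw [if_pos hc, if_pos hc]; ring
            · rw [if_neg hc, if_neg hc]; ring
          rw [Finset.sum_congr rfl key, Finset.sum_sub_distrib,
            Finset.sum_ite_eq' Finset.univ η fun α => 4 * A * v α j0,
            if_pos (Finset.mem_univ η)]
          have : (∑ α, 2 * A * v α j0) = 2 * A * ∑ α, v α j0 := by
            rw [Finset.mul_sum]
          rw [this, hcol j0]; ring
        refine ⟨(Function.update x j0 (-(x j0)), h), Or.inl ⟨j0, rfl, rfl⟩, ?_⟩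
        show raEnergy A lam v (Function.update x j0 (-(x j0))) h ≤ raEnergy A lam v x h
        rw [raEnergy_update_vis, hT, hxj0]
        have hsq : v η j0 * v η j0 = 1 := by
          rcases hpm η j0 with h' | h' <;> rw [h'] <;> norm_num
        nlinarith [hA, hsq]
    · -- all hidden spins down: h = -e
      push_neg at hE
      have hhneg : h = fun _ => (-1 : ℝ) := funext fun α => (hh α).resolve_left (hE α)
      rcases Nat.eq_zero_or_pos V with hV | hV
      · -- V = 0 : flip a hidden spin
        subst hV
        have η0 : Fin H := ⟨0, hH⟩
        refine ⟨(x, Function.update h η0 (-(h η0))), Or.inr ⟨η0, rfl, rfl⟩, ?_⟩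
        show raEnergy A lam v x (Function.update h η0 (-(h η0))) ≤ raEnergy A lam v x h
        rw [raEnergy_update_hid]
        have hhη0 : h η0 = -1 := by rw [hhneg]
        rw [hhη0]
        have hS0 : (∑ j : Fin 0, x j * v η0 j) = 0 := by simp
        rw [hS0]
        push_cast
        have hl : (0:ℝ) < lam η0 := by linarith [(hlam η0).1]
        nlinarith [mul_pos hA hl]
      · -- V > 0 : flip a visible spin, energy unchanged
        have j0 : Fin V := ⟨0, hV⟩
        refine ⟨(Function.update x j0 (-(x j0)), h), Or.inl ⟨j0, rfl, rfl⟩, ?_⟩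
        show raEnergy A lam v (Function.update x j0 (-(x j0))) h ≤ raEnergy A lam v x h
        rw [hhneg]
        exact le_of_eq (hvisE x j0)
  · -- part (b)
    intro x hx
    have η0 : Fin H := ⟨0, hH⟩
    -- walk through visible flips at h = -e
    have walk : ∀ s : Finset (Fin V), ∀ y z : Fin V → ℝ,
        (∀ j, z j = y j ∨ z j = -(y j)) → (∀ j ∉ s, y j = z j) →
        Relation.ReflTransGen step (y, fun _ => (-1 : ℝ)) (z, fun _ => (-1 : ℝ)) := by
      intro s
      induction s using Finset.induction_on with
      | empty =>
          intro y z hyz hagree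
          have : y = z := funext fun j => hagree j (Finset.notMem_empty j)
          rw [this]
      | @insert j t hjt IH =>
          intro y z hyz hagree
          by_cases hcase : z j = y j
          · refine IH y z hyz fun k hk => ?_
            by_cases hkj : k = j
            · rw [hkj]; exact hcase.symm
            · exact hagree k (by simp [Finset.mem_insert, hkj, hk])
          · have hzj : z j = -(y j) := (hyz j).resolve_left hcase
            set y' := Function.update y j (-(y j)) with hy'
            have hstep : step (y, fun _ => (-1 : ℝ)) (y', fun _ => (-1 : ℝ)) :=
              ⟨Or.inl ⟨j, rfl, rfl⟩, le_of_eq (hvisE y j)⟩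
            refine Relation.ReflTransGen.head hstep (IH y' z ?_ ?_)
            · intro k
              by_cases hkj : k = j
              · left; rw [hkj, hy', Function.update_self]; exact hzj
              · rw [hy', Function.update_of_ne hkj]; exact hyz k
            · intro k hk
              by_cases hkj : k = j
              · rw [hkj, hy', Function.update_self]; exact hzj.symm
              · rw [hy', Function.update_of_ne hkj]
                exact hagree k (by simp [Finset.mem_insert, hkj, hk])
    have hw : Relation.ReflTransGen step (x, fun _ => (-1 : ℝ))
        (v η0, fun _ => (-1 : ℝ)) := by
      refine walk Finset.univ x (v η0) (fun j => ?_) fun j hj => absurd (Finset.mem_univ j) hj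
      rcases hpm η0 j with h' | h' <;> rcases hx j with h'' | h'' <;> rw [h', h''] <;> norm_num
    -- final hidden flip
    have hupd : (fun γ => if γ = η0 then (1 : ℝ) else -1)
        = Function.update (fun _ : Fin H => (-1 : ℝ)) η0 (-((fun _ : Fin H => (-1 : ℝ)) η0)) := by
      funext γ
      by_cases hc : γ = η0
      · rw [if_pos hc, hc, Function.update_self]; norm_num
      · rw [if_neg hc, Function.update_of_ne hc]
    have hfin : step (v η0, fun _ => (-1 : ℝ))
        (v η0, fun γ => if γ = η0 then (1 : ℝ) else -1) := by
      refine ⟨Or.inr ⟨η0, rfl, hupd⟩, ?_⟩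
      show raEnergy A lam v (v η0) (fun γ => if γ = η0 then (1 : ℝ) else -1)
          ≤ raEnergy A lam v (v η0) (fun _ => (-1 : ℝ))
      rw [hupd, raEnergy_update_hid]
      have hb : ((fun _ : Fin H => (-1 : ℝ)) η0) = -1 := rfl
      rw [hb]
      have hself : ∑ j, v η0 j * v η0 j = (V : ℝ) := self_overlap (v η0) (hpm η0)
      rw [hself]
      have hl : (0:ℝ) < lam η0 := by linarith [(hlam η0).1]
      nlinarith [mul_pos hA hl]
    exact ⟨η0, hw.tail hfin⟩
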